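/- Monotone fluxes yield sign-definite incremental coefficients: let F(u,v) be C¹ with ∂_u F ≥ 0 and ∂_v F ≤ 0, and let u^±_{j+1/2} be the van Albada MUSCL reconstruction u^-_{j+1/2} = ū_j + u'_j/2, u^+_{j+1/2} = ū_{j+1} − u'_{j+1}/2 with u'_j = ψ_vA(Δū_{j−1/2}, Δū_{j+1/2}). Then C_{j−1/2} := [F(u^-_{j+1/2}, u^+_{j−1/2}) − F(u^-_{j−1/2}, u^+_{j−1/2})]/Δū_{j−1/2} ≥ 0 and D_{j+1/2} := −[F(u^-_{j+1/2}, u^+_{j+1/2}) − F(u^-_{j+1/2}, u^+_{j−1/2})]/Δū_{j+1/2} ≥ 0, whenever the denominators are nonzero. -/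

import Mathlib

noncomputable def vanAlbada (a b : ℝ) : ℝ := (a ^ 2 * b + a * b ^ 2) / (a ^ 2 + b ^ 2)

lemma vanAlbada_comm (a b : ℝ) : vanAlbada a b = vanAlbada b a := by
  unfold vanAlbada; ring_nf

lemma vanAlbada_bounds (a b : ℝ) :
    (1 - Real.sqrt 2) / 2 * a ^ 2 ≤ vanAlbada a b * a ∧
    vanAlbada a b * a ≤ (1 + Real.sqrt 2) / 2 * a ^ 2 := by
  have h2 : (Real.sqrt 2) ^ 2 = 2 := Real.sq_sqrt (by norm_num)
  have h2n : (0:ℝ) ≤ Real.sqrt 2 := Real.sqrt_nonneg 2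
  have h1 : (1:ℝ) < Real.sqrt 2 := by nlinarith
  rcases eq_or_lt_of_le (by positivity : (0:ℝ) ≤ a ^ 2 + b ^ 2) with hs | hs
  · have ha : a = 0 := by nlinarith [sq_nonneg a, sq_nonneg b]
    simp [vanAlbada, ha]
  · have heq : vanAlbada a b * a = (a ^ 2 * b + a * b ^ 2) * a / (a ^ 2 + b ^ 2) := by
      unfold vanAlbada; ring
    have hm : (0:ℝ) < 2 * (Real.sqrt 2 - 1) := by linarith
    have hp : (0:ℝ) < 2 * (Real.sqrt 2 + 1) := by linarith
    constructor
    · rw [heq, le_div_iff₀ hs, ← sub_nonneg]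
      have key : (a ^ 2 * b + a * b ^ 2) * a - (1 - Real.sqrt 2) / 2 * a ^ 2 * (a ^ 2 + b ^ 2)
          = a ^ 2 * ((Real.sqrt 2 - 1) * a + b) ^ 2 / (2 * (Real.sqrt 2 - 1)) := by
        rw [eq_div_iff (ne_of_gt hm)]
        linear_combination a ^ 2 * b ^ 2 * h2
      rw [key]; positivity
    · rw [heq, div_le_iff₀ hs, ← sub_nonneg]
      have key : (1 + Real.sqrt 2) / 2 * a ^ 2 * (a ^ 2 + b ^ 2) - (a ^ 2 * b + a * b ^ 2) * a
          = a ^ 2 * ((Real.sqrt 2 + 1) * a - b) ^ 2 / (2 * (Real.sqrt 2 + 1)) := by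
        rw [eq_div_iff (ne_of_gt hp)]
        linear_combination a ^ 2 * b ^ 2 * h2
      rw [key]; positivity

/-- For a monotone C¹ numerical flux and the van Albada MUSCL reconstruction,
the incremental coefficients `C_{j−1/2}` and `D_{j+1/2}` are nonnegative.
Here `um j = u⁻_{j+1/2}` and `up j = u⁺_{j+1/2}`. -/
theorem monotone_flux_incremental_coeffs_nonneg
    (F : ℝ → ℝ → ℝ) (hF : ContDiff ℝ 1 fun p : ℝ × ℝ => F p.1 p.2)
    (hFu : ∀ x y : ℝ, 0 ≤ deriv (fun u => F u y) x)
    (hFv : ∀ x y : ℝ, deriv (fun v => F x v) y ≤ 0)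
    (u u' um up : ℤ → ℝ)
    (hu' : ∀ j : ℤ, u' j = vanAlbada (u j - u (j - 1)) (u (j + 1) - u j))
    (hum : ∀ j : ℤ, um j = u j + u' j / 2)
    (hup : ∀ j : ℤ, up j = u (j + 1) - u' (j + 1) / 2) :
    ∀ j : ℤ,
      (u j - u (j - 1) ≠ 0 →
        0 ≤ (F (um j) (up (j - 1)) - F (um (j - 1)) (up (j - 1))) /
            (u j - u (j - 1))) ∧
      (u (j + 1) - u j ≠ 0 →
        0 ≤ -((F (um j) (up j) - F (um j) (up (j - 1))) /
            (u (j + 1) - u j))) := by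
  have hdiff : Differentiable ℝ (fun p : ℝ × ℝ => F p.1 p.2) := hF.differentiable one_ne_zero
  have hmono : ∀ y : ℝ, Monotone fun x => F x y := by
    intro y
    have hd : Differentiable ℝ fun x => F x y :=
      hdiff.comp (differentiable_id.prodMk (differentiable_const y))
    exact monotone_of_deriv_nonneg hd (fun x => hFu x y)
  have hanti : ∀ x : ℝ, Antitone fun y => F x y := by
    intro x
    have hd : Differentiable ℝ fun y => F x y :=
      hdiff.comp ((differentiable_const x).prodMk differentiable_id)
    exact antitone_of_deriv_nonpos hd (fun y => hFv x y)
  have h2 : (Real.sqrt 2) ^ 2 = 2 := Real.sq_sqrt (by norm_num)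
  have h2le : Real.sqrt 2 ≤ 2 := by nlinarith [Real.sqrt_nonneg 2]
  intro j
  -- abbreviations
  set a := u j - u (j - 1) with hadef
  set b := u (j + 1) - u j with hbdef
  have e1 : j - 1 - 1 = j - 2 := by ring
  have e2 : j - 1 + 1 = j := by ring
  have e3 : j + 1 - 1 = j := by ring
  have e4 : j + 1 + 1 = j + 2 := by ring
  have hj : u' j = vanAlbada a b := hu' j
  have hjm : u' (j - 1) = vanAlbada a (u (j - 1) - u (j - 2)) := by
    rw [hu' (j - 1), e1, e2, vanAlbada_comm]
  have hjp : u' (j + 1) = vanAlbada b (u (j + 2) - u (j + 1)) := by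
    rw [hu' (j + 1), e3, e4]
  constructor
  · -- C coefficient
    intro ha
    have k1 := (vanAlbada_bounds a b).1
    have k2 := (vanAlbada_bounds a (u (j - 1) - u (j - 2))).2
    have hd : 0 ≤ a * (um j - um (j - 1)) := by
      rw [hum j, hum (j - 1), hj, hjm]
      have expand : a * (u j + vanAlbada a b / 2 -
          (u (j - 1) + vanAlbada a (u (j - 1) - u (j - 2)) / 2))
          = a ^ 2 + (vanAlbada a b * a - vanAlbada a (u (j - 1) - u (j - 2)) * a) / 2 := by
        rw [hadef]; ring
      rw [expand]
      nlinarith [sq_nonneg a]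
    rcases lt_or_gt_of_ne ha with hneg | hpos
    · have hle : um j ≤ um (j - 1) := by nlinarith
      have hnum : F (um j) (up (j - 1)) - F (um (j - 1)) (up (j - 1)) ≤ 0 :=
        sub_nonpos.2 (hmono (up (j - 1)) hle)
      exact div_nonneg_of_nonpos hnum hneg.le
    · have hle : um (j - 1) ≤ um j := by nlinarith
      have hnum : 0 ≤ F (um j) (up (j - 1)) - F (um (j - 1)) (up (j - 1)) :=
        sub_nonneg.2 (hmono (up (j - 1)) hle)
      exact div_nonneg hnum hpos.le
  · -- D coefficient
    intro hb
    have k1 := (vanAlbada_bounds b (u (j + 2) - u (j + 1))).2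
    have k2 := (vanAlbada_bounds b a).1
    have hba : vanAlbada a b = vanAlbada b a := vanAlbada_comm a b
    have hd : 0 ≤ b * (up j - up (j - 1)) := by
      rw [hup j, hup (j - 1), e2, hjp, hj, hba]
      have expand : b * (u (j + 1) - vanAlbada b (u (j + 2) - u (j + 1)) / 2 -
          (u j - vanAlbada b a / 2))
          = b ^ 2 - (vanAlbada b (u (j + 2) - u (j + 1)) * b - vanAlbada b a * b) / 2 := by
        rw [hbdef]; ring
      rw [expand]
      nlinarith [sq_nonneg b]
    rw [neg_div']
    rcases lt_or_gt_of_ne hb with hneg | hpos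
    · have hle : up j ≤ up (j - 1) := by nlinarith
      have hnum : 0 ≤ F (um j) (up j) - F (um j) (up (j - 1)) :=
        sub_nonneg.2 (hanti (um j) hle)
      have := div_nonneg_of_nonpos (neg_nonpos.2 hnum) hneg.le
      simpa using this
    · have hle : up (j - 1) ≤ up j := by nlinarith
      have hnum : F (um j) (up j) - F (um j) (up (j - 1)) ≤ 0 :=
        sub_nonpos.2 (hanti (um j) hle)
      have := div_nonneg (neg_nonneg.2 hnum) hpos.le
      simpa using this
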